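/- Let 𝒳 be a d-dimensional trajectory set and (X,j) a type II arbitrage node, i.e. 0 does not belong to the closure of the convex hull of ΔX(𝒳_{(X,j)}) = {X'_{j+1} − X'_j : X' ∈ 𝒳_{(X,j)}}. Then σ̄_j f(X) = −∞ for every function f : 𝒳 → [−∞,∞]. -/

import Mathlib

open scoped InnerProductSpace ENNReal
open Finset

namespace Traj

variable {E : Type*} [NormedAddCommGroup E] [InnerProductSpace ℝ E]

/-- A trajectory set: a nonempty set of sequences sharing a common initial value. -/
def IsTrajectorySet (T : Set (ℕ → E)) (x0 : E) : Prop :=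
  T.Nonempty ∧ ∀ X ∈ T, X 0 = x0

/-- The conditional trajectory set at the node `(X, k)`. -/
def condSet (T : Set (ℕ → E)) (X : ℕ → E) (k : ℕ) : Set (ℕ → E) :=
  {Y | Y ∈ T ∧ ∀ i ≤ k, Y i = X i}

/-- Non-anticipativity of a family `(G i)_{i ≥ j}` of functions on the conditional set. -/
def NonAnticipative (T : Set (ℕ → E)) (X : ℕ → E) (j : ℕ)
    {F : Type*} (G : ℕ → (ℕ → E) → F) : Prop :=
  ∀ i, j ≤ i → ∀ Y ∈ condSet T X j, ∀ Z ∈ condSet T X j,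
    (∀ k, j ≤ k → k ≤ i → Y k = Z k) → G i Y = G i Z

/-- The simple portfolio payoff `Π^{V,H}_{j,n}`. -/
noncomputable def piPort (H : ℕ → (ℕ → E) → E) (j n : ℕ) (V : ℝ) (Y : ℕ → E) : ℝ :=
  V + ∑ i ∈ Finset.Ico j n, ⟪H i Y, Y (i + 1) - Y i⟫_ℝ

/-- The total initial cost `Σ_{m ≥ 0} V^m` of a generalized portfolio (`V^m ≥ 0` for `m ≥ 1`). -/
noncomputable def SuperhedgeCost (V : ℕ → ℝ) : EReal :=
  (V 0 : EReal) + ((∑' m : ℕ, ENNReal.ofReal (V (m + 1)) : ℝ≥0∞) : EReal)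

/-- `(V, H, n)` is a generalized superhedge of `f` at node `(X, j)`: `f_0 = Π^{V⁰,H⁰}_{j,n₀}`
and, for `m ≥ 1`, `f_m = Π^{Vᵐ,Hᵐ}_{j,n_m}` with `Π^{Vᵐ,Hᵐ}_{j,n} ≥ 0` for all `n ≥ j`,
and `f ≤ Σ_{m ≥ 0} f_m` on the conditional set. -/
def IsSuperhedge (T : Set (ℕ → E)) (X : ℕ → E) (j : ℕ) (f : (ℕ → E) → EReal)
    (V : ℕ → ℝ) (H : ℕ → ℕ → (ℕ → E) → E) (n : ℕ → ℕ) : Prop :=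
  (∀ m, NonAnticipative T X j (H m)) ∧ (∀ m, j ≤ n m) ∧
  (∀ m, 1 ≤ m → ∀ k, j ≤ k → ∀ Y ∈ condSet T X j, 0 ≤ piPort (H m) j k (V m) Y) ∧
  (∀ Y ∈ condSet T X j,
    f Y ≤ (piPort (H 0) j (n 0) (V 0) Y : EReal)
      + ((∑' m : ℕ, ENNReal.ofReal (piPort (H (m + 1)) j (n (m + 1)) (V (m + 1)) Y) :
          ℝ≥0∞) : EReal))

/-- The conditional superhedging operator `σ̄_j f (X)`. -/
noncomputable def sigmaUp (T : Set (ℕ → E)) (X : ℕ → E) (j : ℕ)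
    (f : (ℕ → E) → EReal) : EReal :=
  sInf {c : EReal | ∃ V H n, IsSuperhedge T X j f V H n ∧ c = SuperhedgeCost V}

/-- The conditional underhedging operator `σ̲_j f = -σ̄_j (-f)`. -/
noncomputable def sigmaDown (T : Set (ℕ → E)) (X : ℕ → E) (j : ℕ)
    (f : (ℕ → E) → EReal) : EReal :=
  - sigmaUp T X j (fun Y => - f Y)

/-- Hedge data for the conditional norm operator: all portfolios are nonnegative. -/
def IsNormHedge (T : Set (ℕ → E)) (X : ℕ → E) (j : ℕ) (f : (ℕ → E) → ℝ≥0∞)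
    (V : ℕ → ℝ) (H : ℕ → ℕ → (ℕ → E) → E) (n : ℕ → ℕ) : Prop :=
  (∀ m, NonAnticipative T X j (H m)) ∧ (∀ m, j ≤ n m) ∧
  (∀ m, ∀ k, j ≤ k → ∀ Y ∈ condSet T X j, 0 ≤ piPort (H m) j k (V m) Y) ∧
  (∀ Y ∈ condSet T X j,
    f Y ≤ ∑' m : ℕ, ENNReal.ofReal (piPort (H m) j (n m) (V m) Y))

/-- The conditional norm operator `Ī_j f (X)` (for nonnegative extended-real `f`). -/
noncomputable def Ibar (T : Set (ℕ → E)) (X : ℕ → E) (j : ℕ)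
    (f : (ℕ → E) → ℝ≥0∞) : ℝ≥0∞ :=
  sInf {c : ℝ≥0∞ | ∃ V H n, IsNormHedge T X j f V H n ∧
    c = ∑' m : ℕ, ENNReal.ofReal (V m)}

/-- `A` is conditionally null at the node `(X, j)`. -/
def NullAt (T : Set (ℕ → E)) (X : ℕ → E) (j : ℕ) (A : Set (ℕ → E)) : Prop :=
  Ibar T X j (A.indicator fun _ => (1 : ℝ≥0∞)) = 0

/-- `A` is a (global) null set. -/
def IsNull (T : Set (ℕ → E)) (A : Set (ℕ → E)) : Prop :=
  ∀ X ∈ T, NullAt T X 0 A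

/-- Property `(L_{(X,j)})`. -/
def PropertyL (T : Set (ℕ → E)) (X : ℕ → E) (j : ℕ) : Prop :=
  ∀ V H n, IsSuperhedge T X j (fun _ => (0 : EReal)) V H n →
    (0 : EReal) ≤ SuperhedgeCost V

/-- `(X, k)` is an arbitrage-free node. -/
def ArbitrageFreeNode (T : Set (ℕ → E)) (X : ℕ → E) (k : ℕ) : Prop :=
  ∀ h : E, (∀ Y ∈ condSet T X k, ⟪h, Y (k + 1) - Y k⟫_ℝ = 0) ∨
    (⨅ Y ∈ condSet T X k, ((⟪h, Y (k + 1) - Y k⟫_ℝ : ℝ) : EReal)) < 0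

/-- The set `𝒩` of trajectories passing (non-constantly) through an arbitrage node. -/
def arbNull (T : Set (ℕ → E)) : Set (ℕ → E) :=
  {X | X ∈ T ∧ ∃ j : ℕ, ¬ ArbitrageFreeNode T X j ∧ X (j + 1) ≠ X j}

/-- Property `(L)`-a.e. -/
def LaeHolds (T : Set (ℕ → E)) : Prop :=
  (∀ X ∈ T \ arbNull T, ∀ k, 1 ≤ k → PropertyL T X k) ∧
  (∀ X ∈ T, PropertyL T X 0)

/-- A bounded non-anticipative stopping rule. -/
def BoundedStoppingRule (T : Set (ℕ → E)) (N : (ℕ → E) → ℕ) : Prop :=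
  (∃ nstar, ∀ X ∈ T, N X ≤ nstar) ∧
  (∀ k : ℕ, ∀ X ∈ T, ∀ Y ∈ T, (∀ i ≤ k, X i = Y i) → (N X ≤ k ↔ N Y ≤ k))

end Traj

namespace Traj

/-- at a type II arbitrage node the superhedging operator takes the value `-∞`
on every function. -/
theorem sigmaUp_eq_bot_of_typeII
    (d : ℕ) (T : Set (ℕ → EuclideanSpace ℝ (Fin d))) (x0 : EuclideanSpace ℝ (Fin d))
    (hT : IsTrajectorySet T x0)
    (X : ℕ → EuclideanSpace ℝ (Fin d)) (hX : X ∈ T) (j : ℕ)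
    (hII : (0 : EuclideanSpace ℝ (Fin d)) ∉
      closure (convexHull ℝ ((fun Y => Y (j + 1) - Y j) '' condSet T X j))) :
    ∀ f : (ℕ → EuclideanSpace ℝ (Fin d)) → EReal, sigmaUp T X j f = ⊥ := by
  intro f
  classical
  set S := (fun Y : ℕ → EuclideanSpace ℝ (Fin d) => Y (j + 1) - Y j) '' condSet T X j with hS
  obtain ⟨φ, u, hu0, hu⟩ := geometric_hahn_banach_point_closed
    ((convex_convexHull ℝ S).closure) isClosed_closure hII
  rw [map_zero] at hu0
  set h : EuclideanSpace ℝ (Fin d) :=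
    (InnerProductSpace.toDual ℝ (EuclideanSpace ℝ (Fin d))).symm φ with hh
  have hinner : ∀ y : EuclideanSpace ℝ (Fin d), ⟪h, y⟫_ℝ = φ y :=
    fun y => InnerProductSpace.toDual_symm_apply
  have hpos : ∀ Y ∈ condSet T X j, u < ⟪h, Y (j + 1) - Y j⟫_ℝ := by
    intro Y hY
    rw [hinner]
    exact hu _ (subset_closure (subset_convexHull ℝ S ⟨Y, hY, rfl⟩))
  have key : ∀ r : ℝ, sigmaUp T X j f ≤ (r : EReal) := by
    intro r
    set V : ℕ → ℝ := fun m => if m = 0 then r else 0 with hV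
    set H : ℕ → ℕ → (ℕ → EuclideanSpace ℝ (Fin d)) → EuclideanSpace ℝ (Fin d) :=
      fun m i _ => if m = 0 then 0 else if i = j then h else 0 with hH
    set n : ℕ → ℕ := fun m => if m = 0 then j else j + 1 with hn
    have hpi : ∀ m, 1 ≤ m → ∀ k, ∀ Y : ℕ → EuclideanSpace ℝ (Fin d),
        piPort (H m) j k (V m) Y = if j + 1 ≤ k then ⟪h, Y (j + 1) - Y j⟫_ℝ else 0 := by
      intro m hm k Y
      have hm0 : m ≠ 0 := Nat.one_le_iff_ne_zero.mp hm
      simp only [piPort, hV, hH, if_neg hm0]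
      rw [show (∑ i ∈ Finset.Ico j k,
            ⟪if i = j then h else (0 : EuclideanSpace ℝ (Fin d)), Y (i + 1) - Y i⟫_ℝ)
          = ∑ i ∈ Finset.Ico j k, if i = j then ⟪h, Y (j + 1) - Y j⟫_ℝ else 0 from
        Finset.sum_congr rfl (by intro i _; split_ifs with hi <;> simp [hi])]
      rw [Finset.sum_ite_eq' (Finset.Ico j k) j fun _ => ⟪h, Y (j + 1) - Y j⟫_ℝ]
      simp only [Finset.mem_Ico, le_refl, true_and, zero_add, Nat.lt_iff_add_one_le]
    have hsh : IsSuperhedge T X j f V H n := by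
      refine ⟨?_, ?_, ?_, ?_⟩
      · intro m i _ Y _ Z _ _; rfl
      · intro m; by_cases hm : m = 0 <;> simp [hn, hm]
      · intro m hm k hk Y hY
        rw [hpi m hm k Y]
        split_ifs with hkl
        · exact le_of_lt (lt_trans hu0 (hpos Y hY))
        · exact le_refl 0
      · intro Y hY
        have hterm : ∀ m : ℕ,
            ENNReal.ofReal (piPort (H (m + 1)) j (n (m + 1)) (V (m + 1)) Y)
              = ENNReal.ofReal (⟪h, Y (j + 1) - Y j⟫_ℝ) := by
          intro m
          rw [hpi (m + 1) (Nat.le_add_left 1 m) (n (m + 1)) Y]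
          simp [hn]
        have htop : (∑' m : ℕ, ENNReal.ofReal
            (piPort (H (m + 1)) j (n (m + 1)) (V (m + 1)) Y) : ℝ≥0∞) = ⊤ := by
          simp only [hterm]
          exact ENNReal.tsum_const_eq_top_of_ne_zero
            (by simp [ENNReal.ofReal_eq_zero, not_le]; exact lt_trans hu0 (hpos Y hY))
        rw [htop]
        have : ((piPort (H 0) j (n 0) (V 0) Y : ℝ) : EReal) + ((⊤ : ℝ≥0∞) : EReal) = ⊤ := by
          rw [show ((⊤ : ℝ≥0∞) : EReal) = ⊤ by rfl]
          exact EReal.add_top_of_ne_bot (by simp)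
        rw [this]
        exact le_top
    have hcost : SuperhedgeCost V = (r : EReal) := by
      have : (∑' m : ℕ, ENNReal.ofReal (V (m + 1)) : ℝ≥0∞) = 0 := by
        simp [hV]
      rw [SuperhedgeCost, this]
      simp [hV]
    exact sInf_le ⟨V, H, n, hsh, hcost.symm⟩
  rw [EReal.eq_bot_iff_forall_lt]
  intro y
  exact lt_of_le_of_lt (key (y - 1)) (by exact_mod_cast sub_one_lt y)

end Traj
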